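/- For real numbers α, β, γ, δ with σ = (α+β+γ+δ)/2, one has sin α · sin β · sin γ · sin δ − sin(σ−α)·sin(σ−β)·sin(σ−γ)·sin(σ−δ) = sin σ · sin(σ−α−β) · sin(σ−α−γ) · sin(σ−β−γ). -/
import Mathlib

open Complex in
lemma stmt_4_sin_ratio (u P Q : ℂ) (hP : P ≠ 0) (hQ : Q ≠ 0)
    (h : Complex.exp (u*I) = P / Q) :
    Complex.sin u = (Q^2 - P^2) * I / (2*(P*Q)) := by
  have h1 : Complex.exp (-u*I) = Q / P := by
    rw [show -u*I = -(u*I) by ring, Complex.exp_neg, h, inv_div]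
  simp only [Complex.sin, h1, h]
  rw [div_sub_div _ _ hP hQ, div_mul_eq_mul_div, div_div,
    div_eq_div_iff (mul_ne_zero (mul_ne_zero hP hQ) two_ne_zero)
      (mul_ne_zero two_ne_zero (mul_ne_zero hP hQ))]
  ring

open Complex in
set_option maxHeartbeats 4000000 in
lemma stmt_4_key (x y z w : ℂ) :
    Complex.sin (x + x) * Complex.sin (y + y) * Complex.sin (z + z) * Complex.sin (w + w) -
      Complex.sin (y + z + w - x) * Complex.sin (x + z + w - y) *
        Complex.sin (x + y + w - z) * Complex.sin (x + y + z - w) =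
      Complex.sin (x + y + z + w) * Complex.sin (z + w - (x + y)) *
        Complex.sin (y + w - (x + z)) * Complex.sin (x + w - (y + z)) := by
  have ea := Complex.exp_ne_zero (x * I)
  have eb := Complex.exp_ne_zero (y * I)
  have ec := Complex.exp_ne_zero (z * I)
  have ed := Complex.exp_ne_zero (w * I)
  have s1 := stmt_4_sin_ratio (x+x) (cexp (x*I)^2) 1 (pow_ne_zero _ ea) one_ne_zero
    (by rw [show (x+x)*I = x*I + x*I by ring, Complex.exp_add, div_one, sq])
  have s2 := stmt_4_sin_ratio (y+y) (cexp (y*I)^2) 1 (pow_ne_zero _ eb) one_ne_zero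
    (by rw [show (y+y)*I = y*I + y*I by ring, Complex.exp_add, div_one, sq])
  have s3 := stmt_4_sin_ratio (z+z) (cexp (z*I)^2) 1 (pow_ne_zero _ ec) one_ne_zero
    (by rw [show (z+z)*I = z*I + z*I by ring, Complex.exp_add, div_one, sq])
  have s4 := stmt_4_sin_ratio (w+w) (cexp (w*I)^2) 1 (pow_ne_zero _ ed) one_ne_zero
    (by rw [show (w+w)*I = w*I + w*I by ring, Complex.exp_add, div_one, sq])
  have s5 := stmt_4_sin_ratio (y+z+w-x) (cexp (y*I)*cexp (z*I)*cexp (w*I)) (cexp (x*I))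
    (mul_ne_zero (mul_ne_zero eb ec) ed) ea
    (by rw [show (y+z+w-x)*I = y*I + z*I + w*I - x*I by ring,
      Complex.exp_sub, Complex.exp_add, Complex.exp_add])
  have s6 := stmt_4_sin_ratio (x+z+w-y) (cexp (x*I)*cexp (z*I)*cexp (w*I)) (cexp (y*I))
    (mul_ne_zero (mul_ne_zero ea ec) ed) eb
    (by rw [show (x+z+w-y)*I = x*I + z*I + w*I - y*I by ring,
      Complex.exp_sub, Complex.exp_add, Complex.exp_add])
  have s7 := stmt_4_sin_ratio (x+y+w-z) (cexp (x*I)*cexp (y*I)*cexp (w*I)) (cexp (z*I))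
    (mul_ne_zero (mul_ne_zero ea eb) ed) ec
    (by rw [show (x+y+w-z)*I = x*I + y*I + w*I - z*I by ring,
      Complex.exp_sub, Complex.exp_add, Complex.exp_add])
  have s8 := stmt_4_sin_ratio (x+y+z-w) (cexp (x*I)*cexp (y*I)*cexp (z*I)) (cexp (w*I))
    (mul_ne_zero (mul_ne_zero ea eb) ec) ed
    (by rw [show (x+y+z-w)*I = x*I + y*I + z*I - w*I by ring,
      Complex.exp_sub, Complex.exp_add, Complex.exp_add])
  have s9 := stmt_4_sin_ratio (x+y+z+w) (cexp (x*I)*cexp (y*I)*cexp (z*I)*cexp (w*I)) 1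
    (mul_ne_zero (mul_ne_zero (mul_ne_zero ea eb) ec) ed) one_ne_zero
    (by rw [show (x+y+z+w)*I = x*I + y*I + z*I + w*I by ring,
      Complex.exp_add, Complex.exp_add, Complex.exp_add, div_one])
  have s10 := stmt_4_sin_ratio (z+w-(x+y)) (cexp (z*I)*cexp (w*I)) (cexp (x*I)*cexp (y*I))
    (mul_ne_zero ec ed) (mul_ne_zero ea eb)
    (by rw [show (z+w-(x+y))*I = (z*I + w*I) - (x*I + y*I) by ring,
      Complex.exp_sub, Complex.exp_add, Complex.exp_add])
  have s11 := stmt_4_sin_ratio (y+w-(x+z)) (cexp (y*I)*cexp (w*I)) (cexp (x*I)*cexp (z*I))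
    (mul_ne_zero eb ed) (mul_ne_zero ea ec)
    (by rw [show (y+w-(x+z))*I = (y*I + w*I) - (x*I + z*I) by ring,
      Complex.exp_sub, Complex.exp_add, Complex.exp_add])
  have s12 := stmt_4_sin_ratio (x+w-(y+z)) (cexp (x*I)*cexp (w*I)) (cexp (y*I)*cexp (z*I))
    (mul_ne_zero ea ed) (mul_ne_zero eb ec)
    (by rw [show (x+w-(y+z))*I = (x*I + w*I) - (y*I + z*I) by ring,
      Complex.exp_sub, Complex.exp_add, Complex.exp_add])
  rw [s1, s2, s3, s4, s5, s6, s7, s8, s9, s10, s11, s12]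
  generalize cexp (x * I) = a at ea ⊢
  generalize cexp (y * I) = b at eb ⊢
  generalize cexp (z * I) = c at ec ⊢
  generalize cexp (w * I) = d at ed ⊢
  have hD1 : 2*(a^2*1)*(2*(b^2*1))*(2*(c^2*1))*(2*(d^2*1)) ≠ 0 := by
    simp [mul_eq_zero, pow_eq_zero_iff, ea, eb, ec, ed]
  have hD2 : 2*(b*c*d*a)*(2*(a*c*d*b))*(2*(a*b*d*c))*(2*(a*b*c*d)) ≠ 0 := by
    simp [mul_eq_zero, ea, eb, ec, ed]
  have hD3 : 2*(a*b*c*d*1)*(2*(c*d*(a*b)))*(2*(b*d*(a*c)))*(2*(a*d*(b*c))) ≠ 0 := by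
    simp [mul_eq_zero, ea, eb, ec, ed]
  simp only [div_mul_div_comm]
  rw [div_sub_div _ _ hD1 hD2, div_eq_div_iff (mul_ne_zero hD1 hD2) hD3]
  ring

set_option maxHeartbeats 1000000 in
theorem stmt_4 (α β γ δ : ℝ) (σ : ℝ) (hσ : σ = (α + β + γ + δ) / 2) :
    Real.sin α * Real.sin β * Real.sin γ * Real.sin δ -
      Real.sin (σ - α) * Real.sin (σ - β) * Real.sin (σ - γ) * Real.sin (σ - δ) =
      Real.sin σ * Real.sin (σ - α - β) * Real.sin (σ - α - γ) * Real.sin (σ - β - γ) := by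
  subst hσ
  rw [← Complex.ofReal_inj]
  push_cast
  have h := stmt_4_key ((α : ℂ)/2) ((β : ℂ)/2) ((γ : ℂ)/2) ((δ : ℂ)/2)
  ring_nf at h ⊢
  exact h
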